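/- Under the PRP mediator and action-targeted utility, in any improvement cycle, for every improvement step r and every topic k, B_k(a^r) = B_k(a^{r+1}): the highest quality on every topic is constant throughout the cycle. -/

import Mathlib

open Finset

noncomputable section

/-- Highest quality of a document on topic `k` under profile `a`:
`B_k(a) = max_j Q_{j,k} · 1[a_j = k]` (with value `0` when the max is over an empty set). -/
def hiQ {n m : ℕ} (Q : Fin n → Fin m → ℝ) (k : Fin m) (a : Fin n → Fin m) : ℝ :=
  Finset.univ.fold max 0 (fun j => if a j = k then Q j k else 0)

/-- Number of authors writing on topic `k` with the highest quality `B_k(a)`. -/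
def numTop {n m : ℕ} (Q : Fin n → Fin m → ℝ) (k : Fin m) (a : Fin n → Fin m) : ℕ :=
  (Finset.univ.filter (fun j => a j = k ∧ Q j k = hiQ Q k a)).card

/-- The PRP mediator: first-rank probability of author `j` on topic `k` under profile `a`. -/
def prp {n m : ℕ} (Q : Fin n → Fin m → ℝ) (k : Fin m) (a : Fin n → Fin m) (j : Fin n) : ℝ :=
  if a j = k ∧ Q j k = hiQ Q k a then 1 / (numTop Q k a : ℝ) else 0

/-- Exposure-targeted utility under the PRP mediator. -/
def uEx {n m : ℕ} (D : Fin m → ℝ) (Q : Fin n → Fin m → ℝ) (a : Fin n → Fin m) (j : Fin n) : ℝ :=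
  D (a j) * prp Q (a j) a j

/-- Action-targeted utility under the PRP mediator. -/
def uAc {n m : ℕ} (D : Fin m → ℝ) (Q : Fin n → Fin m → ℝ) (a : Fin n → Fin m) (j : Fin n) : ℝ :=
  D (a j) * prp Q (a j) a j * Q j (a j)

/-- `b` is obtained from `a` by a unilateral deviation of author `p` strictly
increasing her utility (an improvement step). -/
def ImpStep {n m : ℕ} (u : (Fin n → Fin m) → Fin n → ℝ)
    (a b : Fin n → Fin m) (p : Fin n) : Prop :=
  (∀ i, i ≠ p → b i = a i) ∧ b p ≠ a p ∧ u a p < u b p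

/-- `γ` is an improvement path: each consecutive pair of profiles is an improvement step. -/
def IsImpPath {n m l : ℕ} (u : (Fin n → Fin m) → Fin n → ℝ)
    (γ : Fin (l + 1) → Fin n → Fin m) : Prop :=
  ∀ r : Fin l, ∃ p, ImpStep u (γ r.castSucc) (γ r.succ) p

/-- `W_k(γ)`: the minimum of `H_k` over all profiles in the finite path `γ`. -/
def minTop {n m l : ℕ} (Q : Fin n → Fin m → ℝ) (k : Fin m)
    (γ : Fin (l + 1) → Fin n → Fin m) : ℕ :=
  Finset.univ.inf' Finset.univ_nonempty (fun r => numTop Q k (γ r))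

/-- `S_k(γ)`: the maximum of `B_k` over all profiles in the finite path `γ`. -/
def maxQ {n m l : ℕ} (Q : Fin n → Fin m → ℝ) (k : Fin m)
    (γ : Fin (l + 1) → Fin n → Fin m) : ℝ :=
  Finset.univ.sup' Finset.univ_nonempty (fun r => hiQ Q k (γ r))

section Basic
variable {n m : ℕ} (Q : Fin n → Fin m → ℝ) {k : Fin m} {a b : Fin n → Fin m}

lemma hiQ_nonneg : 0 ≤ hiQ Q k a := by
  rw [hiQ, Finset.le_fold_max]; exact Or.inl le_rfl

lemma le_hiQ {j : Fin n} (h : a j = k) : Q j k ≤ hiQ Q k a := by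
  rw [hiQ, Finset.le_fold_max]
  exact Or.inr ⟨j, Finset.mem_univ j, by rw [if_pos h]⟩

lemma hiQ_le {x : ℝ} (hx : 0 ≤ x) (h : ∀ j, a j = k → Q j k ≤ x) : hiQ Q k a ≤ x := by
  rw [hiQ, Finset.fold_max_le]
  refine ⟨hx, fun j _ => ?_⟩
  by_cases hj : a j = k
  · rw [if_pos hj]; exact h j hj
  · rw [if_neg hj]; exact hx

lemma hiQ_attained (h : 0 < hiQ Q k a) : ∃ j, a j = k ∧ Q j k = hiQ Q k a := by
  have := (Finset.le_fold_max (b := (0:ℝ))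
    (f := fun j => if a j = k then Q j k else 0) (c := hiQ Q k a) (s := Finset.univ)).1 le_rfl
  rcases this with h0 | ⟨j, _, hj⟩
  · linarith
  · by_cases hjk : a j = k
    · rw [if_pos hjk] at hj
      exact ⟨j, hjk, le_antisymm (le_hiQ Q hjk) hj⟩
    · rw [if_neg hjk] at hj; linarith

lemma hiQ_congr (h : ∀ j, a j = k ↔ b j = k) : hiQ Q k a = hiQ Q k b := by
  unfold hiQ
  apply Finset.fold_congr
  intro j _
  by_cases hj : a j = k
  · rw [if_pos hj, if_pos ((h j).1 hj)]
  · rw [if_neg hj, if_neg (fun hb => hj ((h j).2 hb))]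

lemma numTop_congr (h : ∀ j, a j = k ↔ b j = k) : numTop Q k a = numTop Q k b := by
  unfold numTop
  congr 1
  apply Finset.filter_congr
  intro j _
  rw [hiQ_congr Q h]
  constructor
  · rintro ⟨h1, h2⟩; exact ⟨(h j).1 h1, h2⟩
  · rintro ⟨h1, h2⟩; exact ⟨(h j).2 h1, h2⟩

lemma numTop_le : numTop Q k a ≤ n := by
  calc numTop Q k a ≤ Finset.univ.card := Finset.card_filter_le _ _
  _ = n := by simp

lemma one_le_numTop {j : Fin n} (h1 : a j = k) (h2 : Q j k = hiQ Q k a) :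
    1 ≤ numTop Q k a := by
  apply Finset.card_pos.mpr
  exact ⟨j, Finset.mem_filter.mpr ⟨Finset.mem_univ j, h1, h2⟩⟩

end Basic

section Util
variable {n m : ℕ} {D : Fin m → ℝ} {Q : Fin n → Fin m → ℝ} {a : Fin n → Fin m}
  (hD : ∀ k, 0 ≤ D k) (hQ : ∀ j k, Q j k ∈ Set.Icc (0:ℝ) 1)

include hD hQ in
lemma uAc_nonneg (j : Fin n) : 0 ≤ uAc D Q a j := by
  unfold uAc prp
  split_ifs
  · apply mul_nonneg (mul_nonneg (hD _) _) (hQ j _).1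
    positivity
  · simp

lemma uAc_top {j : Fin n} (h : 0 < uAc D Q a j) : Q j (a j) = hiQ Q (a j) a := by
  by_contra hc
  rw [uAc, prp, if_neg (fun hh => hc hh.2)] at h
  simp at h

lemma uAc_eq {j : Fin n} (h : Q j (a j) = hiQ Q (a j) a) :
    uAc D Q a j = D (a j) * (1 / (numTop Q (a j) a : ℝ)) * Q j (a j) := by
  rw [uAc, prp, if_pos ⟨rfl, h⟩]

end Util

section Step
variable {n m : ℕ} {Q : Fin n → Fin m → ℝ} {a b : Fin n → Fin m} {p : Fin n}
  (hmove : ∀ i, i ≠ p → b i = a i) (hne : b p ≠ a p)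

include hmove hne in
lemma step_other_iff {j : Fin m} (hja : j ≠ a p) (hjb : j ≠ b p) :
    ∀ i, a i = j ↔ b i = j := by
  intro i
  by_cases hip : i = p
  · subst hip
    constructor
    · intro h; exact absurd h.symm hja
    · intro h; exact absurd h.symm hjb
  · rw [hmove i hip]

include hmove hne in
lemma step_new_mono : hiQ Q (b p) a ≤ hiQ Q (b p) b := by
  apply hiQ_le Q (hiQ_nonneg Q)
  intro j hj
  have hjp : j ≠ p := by rintro rfl; exact hne hj.symm
  have : b j = b p := by rw [hmove j hjp]; exact hj
  exact le_hiQ Q this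

include hmove hne in
lemma step_old_mono : hiQ Q (a p) b ≤ hiQ Q (a p) a := by
  apply hiQ_le Q (hiQ_nonneg Q)
  intro j hj
  have hjp : j ≠ p := by rintro rfl; exact hne hj
  rw [hmove j hjp] at hj
  exact le_hiQ Q hj

include hmove hne in
lemma step_old_drop (hdrop : hiQ Q (a p) b < hiQ Q (a p) a) :
    Q p (a p) = hiQ Q (a p) a ∧ numTop Q (a p) a = 1 := by
  have hpos : 0 < hiQ Q (a p) a := lt_of_le_of_lt (hiQ_nonneg Q) hdrop
  obtain ⟨j, hj1, hj2⟩ := hiQ_attained Q hpos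
  have hjp : j = p := by
    by_contra hc
    have : b j = a p := by rw [hmove j hc]; exact hj1
    have := le_hiQ Q this
    rw [hj2] at this; linarith
  rw [hjp] at hj2
  refine ⟨hj2, ?_⟩
  have hsub : Finset.univ.filter (fun i => a i = a p ∧ Q i (a p) = hiQ Q (a p) a) = {p} := by
    apply Finset.eq_singleton_iff_unique_mem.mpr
    refine ⟨Finset.mem_filter.mpr ⟨Finset.mem_univ p, rfl, hj2⟩, ?_⟩
    intro x hx
    rw [Finset.mem_filter] at hx
    by_contra hc
    have hbx : b x = a p := by rw [hmove x hc]; exact hx.2.1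
    have := le_hiQ Q hbx
    rw [hx.2.2] at this; linarith
  rw [numTop, hsub, Finset.card_singleton]

include hmove hne in
lemma step_join_H (hconst : hiQ Q (b p) a = hiQ Q (b p) b)
    (htop : Q p (b p) = hiQ Q (b p) b) :
    numTop Q (b p) b = numTop Q (b p) a + 1 := by
  have hpa : a p ≠ b p := fun h => hne h.symm
  have hset : Finset.univ.filter (fun i => b i = b p ∧ Q i (b p) = hiQ Q (b p) b)
      = insert p (Finset.univ.filter (fun i => a i = b p ∧ Q i (b p) = hiQ Q (b p) a)) := by
    ext x
    simp only [Finset.mem_insert, Finset.mem_filter, Finset.mem_univ, true_and]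
    constructor
    · rintro ⟨h1, h2⟩
      by_cases hx : x = p
      · exact Or.inl hx
      · exact Or.inr ⟨by rw [← hmove x hx]; exact h1, by rw [hconst]; exact h2⟩
    · rintro (rfl | ⟨h1, h2⟩)
      · exact ⟨rfl, htop⟩
      · have hx : x ≠ p := by rintro rfl; exact hpa h1
        exact ⟨by rw [hmove x hx]; exact h1, by rw [← hconst]; exact h2⟩
  have hpnot : p ∉ Finset.univ.filter (fun i => a i = b p ∧ Q i (b p) = hiQ Q (b p) a) := by
    simp only [Finset.mem_filter, Finset.mem_univ, true_and]
    rintro ⟨h1, _⟩; exact hpa h1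
  rw [numTop, hset, Finset.card_insert_of_notMem hpnot, numTop]

include hmove hne in
lemma step_leave_H (hconst : hiQ Q (a p) a = hiQ Q (a p) b) :
    numTop Q (a p) b = numTop Q (a p) a ∨
    (Q p (a p) = hiQ Q (a p) a ∧ numTop Q (a p) a = numTop Q (a p) b + 1) := by
  by_cases htop : Q p (a p) = hiQ Q (a p) a
  · right
    refine ⟨htop, ?_⟩
    have hset : Finset.univ.filter (fun i => a i = a p ∧ Q i (a p) = hiQ Q (a p) a)
        = insert p (Finset.univ.filter (fun i => b i = a p ∧ Q i (a p) = hiQ Q (a p) b)) := by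
      ext x
      simp only [Finset.mem_insert, Finset.mem_filter, Finset.mem_univ, true_and]
      constructor
      · rintro ⟨h1, h2⟩
        by_cases hx : x = p
        · exact Or.inl hx
        · exact Or.inr ⟨by rw [hmove x hx]; exact h1, by rw [← hconst]; exact h2⟩
      · rintro (rfl | ⟨h1, h2⟩)
        · exact ⟨rfl, htop⟩
        · have hx : x ≠ p := by rintro rfl; exact hne h1
          exact ⟨by rw [← hmove x hx]; exact h1, by rw [hconst]; exact h2⟩
    have hpnot : p ∉ Finset.univ.filter (fun i => b i = a p ∧ Q i (a p) = hiQ Q (a p) b) := by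
      simp only [Finset.mem_filter, Finset.mem_univ, true_and]
      rintro ⟨h1, _⟩; exact hne h1
    rw [numTop, numTop, hset, Finset.card_insert_of_notMem hpnot]
  · left
    have hset : Finset.univ.filter (fun i => b i = a p ∧ Q i (a p) = hiQ Q (a p) b)
        = Finset.univ.filter (fun i => a i = a p ∧ Q i (a p) = hiQ Q (a p) a) := by
      ext x
      simp only [Finset.mem_filter, Finset.mem_univ, true_and]
      constructor
      · rintro ⟨h1, h2⟩
        have hx : x ≠ p := by rintro rfl; exact hne h1
        exact ⟨by rw [← hmove x hx]; exact h1, by rw [hconst]; exact h2⟩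
      · rintro ⟨h1, h2⟩
        have hx : x ≠ p := by
          rintro rfl
          exact htop h2
        exact ⟨by rw [hmove x hx]; exact h1, by rw [← hconst]; exact h2⟩
    rw [numTop, numTop, hset]

end Step

section Path
variable {l : ℕ} {α : Type*}

lemma path_trans (v : Fin (l + 1) → α) (R : α → α → Prop)
    (hrefl : ∀ x, R x x) (htrans : ∀ {x y z}, R x y → R y z → R x z)
    (h : ∀ r : Fin l, R (v r.castSucc) (v r.succ)) :
    ∀ s t : Fin (l + 1), s ≤ t → R (v s) (v t) := by
  have key : ∀ (d : ℕ) (s : Fin (l + 1)) (hd : s.val + d ≤ l),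
      R (v s) (v ⟨s.val + d, by omega⟩) := by
    intro d
    induction d with
    | zero =>
      intro s hd
      have : (⟨s.val + 0, by omega⟩ : Fin (l + 1)) = s := by ext; simp
      rw [this]; exact hrefl _
    | succ d ih =>
      intro s hd
      have h1 := ih s (by omega)
      have hr : (⟨s.val + d, by omega⟩ : Fin (l + 1)) = (⟨s.val + d, by omega⟩ : Fin l).castSucc := rfl
      have h2 := h ⟨s.val + d, by omega⟩
      have hs : (⟨s.val + d, by omega⟩ : Fin l).succ = (⟨s.val + (d + 1), by omega⟩ : Fin (l + 1)) := by
        ext; simp [Fin.succ]; omega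
      rw [hs] at h2
      exact htrans h1 (by rw [hr] at h1 ⊢; exact h2)
  intro s t hst
  have : t = ⟨s.val + (t.val - s.val), by omega⟩ := by ext; simp; omega
  rw [this]
  exact key _ s (by omega)

lemma path_mono (v : Fin (l + 1) → ℕ) (h : ∀ r : Fin l, v r.castSucc ≤ v r.succ) :
    ∀ s t : Fin (l + 1), s ≤ t → v s ≤ v t :=
  path_trans v (· ≤ ·) (fun _ => le_rfl) (fun h1 h2 => le_trans h1 h2) h

lemma path_prop (v : Fin (l + 1) → α) (P : α → Prop)
    (h : ∀ r : Fin l, P (v r.castSucc) → P (v r.succ)) :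
    ∀ s t : Fin (l + 1), s ≤ t → P (v s) → P (v t) :=
  path_trans v (fun x y => P x → P y) (fun _ hx => hx) (fun h1 h2 hx => h2 (h1 hx)) h

/-- cyclic: if some value satisfies P and some doesn't, there is a step exiting P. -/
lemma path_exit (v : Fin (l + 1) → α) (P : α → Prop) (hcyc : v (Fin.last l) = v 0)
    (h1 : ∃ t, P (v t)) (h2 : ∃ t, ¬ P (v t)) :
    ∃ r : Fin l, P (v r.castSucc) ∧ ¬ P (v r.succ) := by
  by_contra hc
  push_neg at hc
  obtain ⟨t1, ht1⟩ := h1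
  obtain ⟨t2, ht2⟩ := h2
  have hprop := path_prop v P hc
  have hlast : P (v (Fin.last l)) := hprop t1 (Fin.last l) (Fin.le_last t1) ht1
  rw [hcyc] at hlast
  exact ht2 (hprop 0 t2 (Fin.zero_le t2) hlast)

end Path

section PhiStep
variable {n m l : ℕ} {D : Fin m → ℝ} {Q : Fin n → Fin m → ℝ}
  {γ : Fin (l + 1) → Fin n → Fin m}

lemma hiQ_le_maxQ (t : Fin (l + 1)) (j : Fin m) : hiQ Q j (γ t) ≤ maxQ Q j γ :=
  Finset.le_sup' (fun r => hiQ Q j (γ r)) (Finset.mem_univ t)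

lemma maxQ_nonneg (j : Fin m) : 0 ≤ maxQ Q j γ :=
  le_trans (hiQ_nonneg Q) (hiQ_le_maxQ 0 j)

lemma const_of_steps {k : Fin m}
    (h : ∀ r : Fin l, hiQ Q k (γ r.castSucc) = hiQ Q k (γ r.succ)) :
    ∀ t, hiQ Q k (γ t) = maxQ Q k γ := by
  have hconst : ∀ t, hiQ Q k (γ t) = hiQ Q k (γ 0) := by
    intro t
    exact (path_trans (fun t => hiQ Q k (γ t)) Eq (fun _ => rfl)
      (fun h1 h2 => h1.trans h2) h 0 t (Fin.zero_le t)).symm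
  intro t
  rw [hconst t]
  apply le_antisymm
  · exact (hconst 0) ▸ hiQ_le_maxQ 0 k
  · apply Finset.sup'_le
    intro t' _
    rw [hconst t']

lemma phi_step (hD : ∀ k, 0 ≤ D k) (hQ : ∀ j k, Q j k ∈ Set.Icc (0:ℝ) 1)
    {c : ℝ} (hc : 0 < c) (N : Fin m → ℕ)
    (hN1 : ∀ (j : Fin m) (h : ℕ), h ≤ n → c * h < D j * maxQ Q j γ → h ≤ N j)
    (hN2 : ∀ (j : Fin m) (h : ℕ), 1 ≤ h → h ≤ N j → c * h < D j * maxQ Q j γ)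
    (hconst : ∀ j : Fin m, c < D j * maxQ Q j γ → ∀ t, hiQ Q j (γ t) = maxQ Q j γ)
    (r : Fin l) (p : Fin n)
    (hstep : ImpStep (uAc D Q) (γ r.castSucc) (γ r.succ) p) :
    (∑ j ∈ Finset.univ.filter (fun j => c < D j * maxQ Q j γ),
        min (numTop Q j (γ r.castSucc)) (N j))
      ≤ ∑ j ∈ Finset.univ.filter (fun j => c < D j * maxQ Q j γ),
        min (numTop Q j (γ r.succ)) (N j) ∧
    ((c ≤ uAc D Q (γ r.castSucc) p ∧ ¬ c < D (γ r.castSucc p) * maxQ Q (γ r.castSucc p) γ) →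
      (∑ j ∈ Finset.univ.filter (fun j => c < D j * maxQ Q j γ),
        min (numTop Q j (γ r.castSucc)) (N j))
      < ∑ j ∈ Finset.univ.filter (fun j => c < D j * maxQ Q j γ),
        min (numTop Q j (γ r.succ)) (N j)) := by
  set a := γ r.castSucc with ha
  set b := γ r.succ with hb
  obtain ⟨hmove, hne, himp⟩ := hstep
  set Fs := Finset.univ.filter (fun j => c < D j * maxQ Q j γ) with hFs
  -- basic facts
  have hu_old_nonneg : 0 ≤ uAc D Q a p := uAc_nonneg hD hQ p
  have hu_new_pos : 0 < uAc D Q b p := lt_of_le_of_lt hu_old_nonneg himp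
  have htopq : Q p (b p) = hiQ Q (b p) b := uAc_top hu_new_pos
  have hHqb1 : 1 ≤ numTop Q (b p) b := one_le_numTop Q rfl htopq
  have hHqbR : (1:ℝ) ≤ (numTop Q (b p) b : ℝ) := by exact_mod_cast hHqb1
  have hnew_le : uAc D Q b p ≤ D (b p) * maxQ Q (b p) γ := by
    rw [uAc_eq htopq]
    have h1 : Q p (b p) ≤ maxQ Q (b p) γ := htopq ▸ hiQ_le_maxQ r.succ (b p)
    have h2 : 0 ≤ Q p (b p) := (hQ p (b p)).1
    have h3 : 1 / (numTop Q (b p) b : ℝ) ≤ 1 := by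
      rw [div_le_one (by linarith)]; linarith
    calc D (b p) * (1 / (numTop Q (b p) b : ℝ)) * Q p (b p)
        ≤ D (b p) * 1 * Q p (b p) := by
          apply mul_le_mul_of_nonneg_right _ h2
          exact mul_le_mul_of_nonneg_left h3 (hD (b p))
      _ = D (b p) * Q p (b p) := by ring
      _ ≤ D (b p) * maxQ Q (b p) γ := mul_le_mul_of_nonneg_left h1 (hD (b p))
  -- the `b p`-side: if the new utility exceeds c then b p ∈ Fs etc.
  have hqside : c < uAc D Q b p →
      (c < D (b p) * maxQ Q (b p) γ) ∧ numTop Q (b p) b = numTop Q (b p) a + 1 ∧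
        numTop Q (b p) b ≤ N (b p) := by
    intro hgt
    have hqF : c < D (b p) * maxQ Q (b p) γ := lt_of_lt_of_le hgt hnew_le
    have hcq := hconst (b p) hqF
    have hBa : hiQ Q (b p) a = maxQ Q (b p) γ := hcq r.castSucc
    have hBb : hiQ Q (b p) b = maxQ Q (b p) γ := hcq r.succ
    have hHq : numTop Q (b p) b = numTop Q (b p) a + 1 :=
      step_join_H hmove hne (hBa.trans hBb.symm) htopq
    have hPH : c * (numTop Q (b p) b : ℝ) < D (b p) * maxQ Q (b p) γ := by
      have hform : uAc D Q b p = D (b p) * maxQ Q (b p) γ / (numTop Q (b p) b : ℝ) := by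
        rw [uAc_eq htopq, htopq, hBb]; ring
      rw [hform, lt_div_iff₀ (by linarith : (0:ℝ) < (numTop Q (b p) b : ℝ))] at hgt
      linarith [hgt]
    exact ⟨hqF, hHq, hN1 (b p) _ (numTop_le Q) hPH⟩
  -- other topics are untouched
  have hother : ∀ j, j ≠ a p → j ≠ b p → numTop Q j a = numTop Q j b :=
    fun j hjo hjq => numTop_congr Q (step_other_iff hmove hne hjo hjq)
  constructor
  · -- weak inequality
    by_cases hcase : (a p) ∈ Fs ∧ min (numTop Q (a p) b) (N (a p)) < min (numTop Q (a p) a) (N (a p))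
    · -- case B : the (a p)-term decreases
      obtain ⟨hoF, hdec⟩ := hcase
      have hoF' : c < D (a p) * maxQ Q (a p) γ := by
        rw [hFs, Finset.mem_filter] at hoF; exact hoF.2
      have hco := hconst (a p) hoF'
      have hBa : hiQ Q (a p) a = maxQ Q (a p) γ := hco r.castSucc
      have hBb : hiQ Q (a p) b = maxQ Q (a p) γ := hco r.succ
      have hleave := step_leave_H hmove hne (hBa.trans hBb.symm)
      rcases hleave with heq | ⟨htopo, hHo⟩
      · rw [heq] at hdec; omega
      · -- Hoa = Hob + 1
        have hHoaN : numTop Q (a p) a ≤ N (a p) := by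
          by_contra hcon
          push_neg at hcon
          omega
        have hHoa1 : 1 ≤ numTop Q (a p) a := by omega
        have hPHoa : c * (numTop Q (a p) a : ℝ) < D (a p) * maxQ Q (a p) γ :=
          hN2 (a p) _ hHoa1 hHoaN
        have huold : c < uAc D Q a p := by
          have hform : uAc D Q a p = D (a p) * maxQ Q (a p) γ / (numTop Q (a p) a : ℝ) := by
            rw [uAc_eq htopo, htopo, hBa]; ring
          rw [hform, lt_div_iff₀ (by exact_mod_cast hHoa1 : (0:ℝ) < (numTop Q (a p) a : ℝ))]
          linarith
        obtain ⟨hqF, hHq, hHqN⟩ := hqside (lt_trans huold himp)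
        have hqFs : (b p) ∈ Fs := by
          rw [hFs, Finset.mem_filter]; exact ⟨Finset.mem_univ _, hqF⟩
        -- sum manipulation
        have hqo' : (b p) ∈ Fs.erase (a p) := Finset.mem_erase.mpr ⟨hne, hqFs⟩
        have hsum : ∑ j ∈ Fs, min (numTop Q j a) (N j) = ∑ j ∈ Fs, min (numTop Q j b) (N j) := by
          rw [← Finset.add_sum_erase Fs _ hoF, ← Finset.add_sum_erase Fs
              (fun j => min (numTop Q j b) (N j)) hoF,
            ← Finset.add_sum_erase _ _ hqo', ← Finset.add_sum_erase _
              (fun j => min (numTop Q j b) (N j)) hqo']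
          have hrest : ∑ j ∈ (Fs.erase (a p)).erase (b p), min (numTop Q j a) (N j)
              = ∑ j ∈ (Fs.erase (a p)).erase (b p), min (numTop Q j b) (N j) := by
            apply Finset.sum_congr rfl
            intro j hj
            rw [Finset.mem_erase] at hj
            obtain ⟨hjq, hj2⟩ := hj
            rw [Finset.mem_erase] at hj2
            rw [hother j hj2.1 hjq]
          rw [hrest]
          omega
        exact le_of_eq hsum
    · -- case A : pointwise
      apply Finset.sum_le_sum
      intro j hj
      by_cases hjo : j = a p
      · subst hjo
        by_contra hcon
        push_neg at hcon
        exact hcase ⟨hj, hcon⟩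
      · by_cases hjq : j = b p
        · subst hjq
          have hjF : c < D (b p) * maxQ Q (b p) γ := by
            rw [hFs, Finset.mem_filter] at hj; exact hj.2
          have hcj := hconst (b p) hjF
          have hHj : numTop Q (b p) b = numTop Q (b p) a + 1 :=
            step_join_H hmove hne ((hcj r.castSucc).trans (hcj r.succ).symm) htopq
          omega
        · rw [hother j hjo hjq]
  · -- strict inequality
    rintro ⟨hcu, honF⟩
    have huold : c < uAc D Q b p := lt_of_le_of_lt hcu himp
    obtain ⟨hqF, hHq, hHqN⟩ := hqside huold
    have hqFs : (b p) ∈ Fs := by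
      rw [hFs, Finset.mem_filter]; exact ⟨Finset.mem_univ _, hqF⟩
    have hoFs : (a p) ∉ Fs := by
      rw [hFs, Finset.mem_filter]
      rintro ⟨_, hcon⟩
      exact honF hcon
    apply Finset.sum_lt_sum
    · intro j hj
      by_cases hjq : j = b p
      · subst hjq; omega
      · have hjo : j ≠ a p := fun h => hoFs (h ▸ hj)
        rw [hother j hjo hjq]
    · exact ⟨b p, hqFs, by omega⟩

end PhiStep

/-- In any improvement cycle under PRP/action-targeted utility (topics indexed so that
`D(k)·S_k(c)` is non-increasing), the highest quality on every topic is unchanged at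
every step of the cycle. -/
theorem stmt6 {n m l : ℕ} (D : Fin m → ℝ) (Q : Fin n → Fin m → ℝ)
    (hD : ∀ k, 0 ≤ D k) (hDsum : ∑ k, D k = 1)
    (hQ : ∀ j k, Q j k ∈ Set.Icc (0:ℝ) 1)
    (γ : Fin (l + 1) → Fin n → Fin m) (hγ : IsImpPath (uAc D Q) γ)
    (hcyc : γ (Fin.last l) = γ 0)
    (hsort : ∀ k k' : Fin m, k ≤ k' → D k' * maxQ Q k' γ ≤ D k * maxQ Q k γ)
    (r : Fin l) (k : Fin m) :
    hiQ Q k (γ r.castSucc) = hiQ Q k (γ r.succ) := by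
  have main : ∀ K : ℕ, ∀ k : Fin m, (k : ℕ) = K →
      ∀ r : Fin l, hiQ Q k (γ r.castSucc) = hiQ Q k (γ r.succ) := by
    intro K
    induction K using Nat.strong_induction_on with
    | _ K IH =>
    intro k hK
    have IH' : ∀ j : Fin m, j < k → ∀ t, hiQ Q j (γ t) = maxQ Q j γ := by
      intro j hj
      exact const_of_steps (IH j.val (hK ▸ hj) j rfl)
    by_contra hcon
    push_neg at hcon
    obtain ⟨r0, hr0⟩ := hcon
    have hS0 : 0 ≤ maxQ Q k γ := maxQ_nonneg k
    rcases eq_or_lt_of_le hS0 with hSz | hSpos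
    · -- S = 0 : hiQ is always 0
      have hz : ∀ t, hiQ Q k (γ t) = 0 := fun t =>
        le_antisymm (hSz ▸ hiQ_le_maxQ t k) (hiQ_nonneg Q)
      exact hr0 ((hz _).trans (hz _).symm)
    rcases eq_or_lt_of_le (hD k) with hDz | hDpos
    · -- D k = 0 : no author ever joins topic k, so hiQ_k is non-increasing; cyclic ⇒ constant
      have hstepk : ∀ r' : Fin l, hiQ Q k (γ r'.succ) ≤ hiQ Q k (γ r'.castSucc) := by
        intro r'
        obtain ⟨p, hmove, hne, himp⟩ := hγ r'
        have hbp : (γ r'.succ) p ≠ k := by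
          intro hbp
          have hpos : 0 < uAc D Q (γ r'.succ) p :=
            lt_of_le_of_lt (uAc_nonneg hD hQ p) himp
          have hzero : uAc D Q (γ r'.succ) p = 0 := by
            rw [uAc, hbp, ← hDz]; ring
          linarith
        by_cases hap : (γ r'.castSucc) p = k
        · have h := step_old_mono (Q := Q) hmove hne
          rw [hap] at h
          exact h
        · have h := hiQ_congr Q (step_other_iff hmove hne
            (fun hh => hap hh.symm) (fun hh => hbp hh.symm))
          exact le_of_eq h.symm
      have hall := path_trans (fun t => hiQ Q k (γ t)) (fun x y => y ≤ x)
        (fun _ => le_rfl) (fun h1 h2 => le_trans h2 h1) hstepk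
      have h1 : hiQ Q k (γ r0.castSucc) ≤ hiQ Q k (γ 0) := hall 0 _ (Fin.zero_le _)
      have h2 : hiQ Q k (γ (Fin.last l)) ≤ hiQ Q k (γ r0.succ) := hall _ _ (Fin.le_last _)
      have h3 : hiQ Q k (γ r0.succ) ≤ hiQ Q k (γ r0.castSucc) := hstepk r0
      rw [hcyc] at h2
      exact hr0 (le_antisymm (by linarith) h3)
    -- main case : c = D k * maxQ Q k γ > 0
    have hc : 0 < D k * maxQ Q k γ := mul_pos hDpos hSpos
    set c := D k * maxQ Q k γ with hcdef
    have hconstF : ∀ j : Fin m, c < D j * maxQ Q j γ → ∀ t, hiQ Q j (γ t) = maxQ Q j γ := by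
      intro j hjF
      have hjk : j < k := by
        by_contra h
        push_neg at h
        exact absurd (hsort k j h) (not_le.mpr hjF)
      exact IH' j hjk
    -- the greatest congestion level at which the utility still exceeds c
    set N : Fin m → ℕ := fun j => Nat.findGreatest (fun h => c * h < D j * maxQ Q j γ) n
      with hNdef
    have hN1 : ∀ (j : Fin m) (h : ℕ), h ≤ n → c * h < D j * maxQ Q j γ → h ≤ N j := by
      intro j h hhn hP
      exact Nat.le_findGreatest hhn hP
    have hN2 : ∀ (j : Fin m) (h : ℕ), 1 ≤ h → h ≤ N j → c * h < D j * maxQ Q j γ := by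
      intro j h h1 hhN
      have hNpos : N j ≠ 0 := by omega
      have hPN : c * (N j : ℝ) < D j * maxQ Q j γ :=
        Nat.findGreatest_of_ne_zero rfl hNpos
      have hcast : (h : ℝ) ≤ (N j : ℝ) := by exact_mod_cast hhN
      nlinarith [hc.le]
    -- the potential function
    set Φ : Fin (l + 1) → ℕ := fun t =>
      ∑ j ∈ Finset.univ.filter (fun j => c < D j * maxQ Q j γ),
        min (numTop Q j (γ t)) (N j) with hΦdef
    have hweak : ∀ r' : Fin l, Φ r'.castSucc ≤ Φ r'.succ := by
      intro r'
      obtain ⟨p', hs'⟩ := hγ r'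
      exact (phi_step hD hQ hc N hN1 hN2 hconstF r' p' hs').1
    -- find the step where hiQ_k drops from its maximum
    have hex : ∃ t, hiQ Q k (γ t) = maxQ Q k γ := by
      obtain ⟨t, _, ht⟩ := Finset.exists_mem_eq_sup' (Finset.univ_nonempty)
        (fun r' : Fin (l+1) => hiQ Q k (γ r'))
      exact ⟨t, ht.symm⟩
    have hnex : ∃ t, ¬ hiQ Q k (γ t) = maxQ Q k γ := by
      by_contra hno
      push_neg at hno
      exact hr0 ((hno r0.castSucc).trans (hno r0.succ).symm)
    obtain ⟨rd, hrd1, hrd2⟩ := path_exit (fun t => hiQ Q k (γ t))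
      (fun x => x = maxQ Q k γ) (by show hiQ Q k (γ (Fin.last l)) = hiQ Q k (γ 0); rw [hcyc]) hex hnex
    obtain ⟨p, hs⟩ := hγ rd
    obtain ⟨hmove, hne, himp⟩ := id hs
    have hdrop : hiQ Q k (γ rd.succ) < hiQ Q k (γ rd.castSucc) := by
      rw [hrd1]
      exact lt_of_le_of_ne (hiQ_le_maxQ _ _) hrd2
    have hapk : (γ rd.castSucc) p = k := by
      by_contra hap
      by_cases hbp : (γ rd.succ) p = k
      · have h := step_new_mono (Q := Q) hmove hne
        rw [hbp] at h
        linarith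
      · have h := hiQ_congr Q (step_other_iff hmove hne
          (fun hh => hap hh.symm) (fun hh => hbp hh.symm))
        linarith [h.le, h.ge]
    have hdrop' : hiQ Q ((γ rd.castSucc) p) (γ rd.succ) < hiQ Q ((γ rd.castSucc) p) (γ rd.castSucc) := by
      rw [hapk]; exact hdrop
    obtain ⟨htop, hone⟩ := step_old_drop (Q := Q) hmove hne hdrop'
    have hcu : c ≤ uAc D Q (γ rd.castSucc) p := by
      have hu := uAc_eq (D := D) htop
      rw [hu, hone, htop, hapk, hrd1]
      simp
      exact hcdef.le
    have honF : ¬ c < D ((γ rd.castSucc) p) * maxQ Q ((γ rd.castSucc) p) γ := by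
      rw [hapk, ← hcdef]
      exact lt_irrefl c
    have hstrict : Φ rd.castSucc < Φ rd.succ :=
      (phi_step hD hQ hc N hN1 hN2 hconstF rd p hs).2 ⟨hcu, honF⟩
    have h0 : Φ 0 ≤ Φ rd.castSucc := path_mono Φ hweak 0 _ (Fin.zero_le _)
    have h1 : Φ rd.succ ≤ Φ (Fin.last l) := path_mono Φ hweak _ _ (Fin.le_last _)
    have h2 : Φ (Fin.last l) = Φ 0 := by
      simp only [hΦdef]
      rw [hcyc]
    omega
  exact main k.val k rfl r
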